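/- Let α, β, γ, μ, ν be an admissible solution of System A on [0,∞) with μ ≡ 0 and ν(0) ≠ 0. Then there exists t₀ ≥ 0 such that either β(t) > α(t) for all t > t₀, or β(t) < α(t) for all t > t₀. -/

import Mathlib

open Topology Filter

/-- **System A**: the homogeneous Ricci flow equations on `SO(3) ⋉ ℝ³ / SO(2)` for
real-valued differentiable functions `α β γ μ ν` on a set `s`, with `τ := μ² + ν²`,
together with the admissibility conditions `α > 0`, `β > 0`, `γ > 0`, `βγ > τ`. -/
def IsAdmissibleSolutionA (α β γ μ ν : ℝ → ℝ) (s : Set ℝ) : Prop :=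
  ∀ t ∈ s,
    0 < α t ∧ 0 < β t ∧ 0 < γ t ∧
    μ t ^ 2 + ν t ^ 2 < β t * γ t ∧
    HasDerivWithinAt α
      (2 * (β t ^ 2 - α t ^ 2) / (β t * γ t - (μ t ^ 2 + ν t ^ 2)) -
        4 * α t ^ 2 * ν t ^ 2 / (β t * γ t - (μ t ^ 2 + ν t ^ 2)) ^ 2) s t ∧
    HasDerivWithinAt β
      (β t / α t * ((α t ^ 2 - β t ^ 2) / (β t * γ t - (μ t ^ 2 + ν t ^ 2)))) s t ∧
    HasDerivWithinAt γ
      (-4 + 2 * β t / α t +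
        γ t / α t * ((α t ^ 2 - β t ^ 2) / (β t * γ t - (μ t ^ 2 + ν t ^ 2)))) s t ∧
    HasDerivWithinAt μ
      (μ t * (α t ^ 2 - β t ^ 2) / (α t * (β t * γ t - (μ t ^ 2 + ν t ^ 2)))) s t ∧
    HasDerivWithinAt ν
      (-(ν t * (α t ^ 2 + β t ^ 2)) / (α t * (β t * γ t - (μ t ^ 2 + ν t ^ 2)))) s t

/-- If `g` has derivative `G` on `[0,∞)`, and `G > 0` at every zero of `g`, then the set
`{g > 0}` is forward invariant: if `g a > 0` then `g t > 0` for all `t ≥ a`. -/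
lemma forward_pos (g G : ℝ → ℝ)
    (hder : ∀ t ∈ Set.Ici (0:ℝ), HasDerivWithinAt g (G t) (Set.Ici 0) t)
    (hpos : ∀ t ∈ Set.Ici (0:ℝ), g t = 0 → 0 < G t)
    (a : ℝ) (ha : 0 ≤ a) (hga : 0 < g a) :
    ∀ t, a ≤ t → 0 < g t := by
  intro t₂ ht₂
  by_contra hle
  push_neg at hle
  have hat₂ : a < t₂ := by
    rcases lt_or_eq_of_le ht₂ with h' | h'
    · exact h'
    · exact absurd hga (by rw [h']; linarith)
  have hcont : ContinuousOn g (Set.Ici 0) := fun s hs => (hder s hs).continuousWithinAt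
  set E : Set ℝ := Set.Icc a t₂ ∩ g ⁻¹' Set.Iic 0 with hE
  have hEsub : Set.Icc a t₂ ⊆ Set.Ici 0 := fun x hx => le_trans ha hx.1
  have hE_closed : IsClosed E :=
    (hcont.mono hEsub).preimage_isClosed_of_isClosed isClosed_Icc isClosed_Iic
  have hE_ne : E.Nonempty := ⟨t₂, ⟨le_of_lt hat₂, le_rfl⟩, hle⟩
  have hbdd : BddBelow E := ⟨a, fun x hx => hx.1.1⟩
  set c := sInf E with hc
  have hcE : c ∈ E := hE_closed.csInf_mem hE_ne hbdd
  have hac : a ≤ c := hcE.1.1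
  have hlt : ∀ s, a ≤ s → s < c → 0 < g s := by
    intro s hs hsc
    by_contra hgs
    push_neg at hgs
    have : s ∈ E := ⟨⟨hs, le_trans (le_of_lt hsc) hcE.1.2⟩, hgs⟩
    exact absurd (csInf_le hbdd this) (not_le.mpr hsc)
  have hac' : a < c := by
    rcases lt_or_eq_of_le hac with h' | h'
    · exact h'
    · exact absurd hcE.2 (by rw [← h']; exact not_le.mpr hga)
  -- g c = 0
  have hgc0 : g c = 0 := by
    refine le_antisymm hcE.2 ?_
    have hmem : c ∈ closure (Set.Ioo a c) := by
      rw [closure_Ioo (ne_of_lt hac')]; exact ⟨le_of_lt hac', le_rfl⟩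
    have hne : (𝓝[Set.Ioo a c] c).NeBot := mem_closure_iff_nhdsWithin_neBot.mp hmem
    have htend : Filter.Tendsto g (𝓝[Set.Ioo a c] c) (𝓝 (g c)) :=
      (hcont c (le_trans ha hac)).mono (fun x hx => le_trans ha (le_of_lt hx.1))
    exact ge_of_tendsto htend (eventually_mem_nhdsWithin.mono
      (fun x hx => le_of_lt (hlt x (le_of_lt hx.1) hx.2)))
  have hc0 : (0:ℝ) < c := lt_of_le_of_lt ha hac'
  have hG : 0 < G c := hpos c (le_of_lt hc0) hgc0
  have hd : HasDerivAt g (G c) c :=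
    (hder c (le_of_lt hc0)).hasDerivAt (Ici_mem_nhds hc0)
  rw [hasDerivAt_iff_tendsto_slope] at hd
  have hev : ∀ᶠ s in 𝓝[<] c, 0 < slope g c s :=
    (hd.eventually (eventually_gt_nhds hG)).filter_mono (nhdsLT_le_nhdsNE c)
  have hev2 : ∀ᶠ s in 𝓝[<] c, s ∈ Set.Ioo a c :=
    Ioo_mem_nhdsLT_of_mem ⟨hac', le_rfl⟩
  obtain ⟨s, hs1, hs2⟩ := (hev.and hev2).exists
  have hgs : 0 < g s := hlt s (le_of_lt hs2.1) hs2.2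
  have : slope g c s < 0 := by
    rw [slope_def_field, hgc0]
    apply div_neg_of_pos_of_neg
    · linarith
    · linarith [hs2.2]
  linarith

/-- Version starting from `g a ≥ 0`: strictly positive strictly afterwards. -/
lemma forward_pos' (g G : ℝ → ℝ)
    (hder : ∀ t ∈ Set.Ici (0:ℝ), HasDerivWithinAt g (G t) (Set.Ici 0) t)
    (hpos : ∀ t ∈ Set.Ici (0:ℝ), g t = 0 → 0 < G t)
    (a : ℝ) (ha : 0 ≤ a) (hga : 0 ≤ g a) :
    ∀ t, a < t → 0 < g t := by
  intro t₂ ht₂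
  rcases lt_or_eq_of_le hga with h' | h'
  · exact forward_pos g G hder hpos a ha h' t₂ (le_of_lt ht₂)
  · -- g a = 0, so G a > 0 and g becomes positive just after a
    have hG : 0 < G a := hpos a ha h'.symm
    have hd := hder a ha
    rw [hasDerivWithinAt_iff_tendsto_slope] at hd
    have hmono : 𝓝[>] a ≤ 𝓝[Set.Ici 0 \ {a}] a := by
      apply nhdsWithin_mono
      intro x hx
      exact ⟨le_trans ha (le_of_lt hx), ne_of_gt hx⟩
    have hev : ∀ᶠ s in 𝓝[>] a, 0 < slope g a s :=
      (hd.eventually (eventually_gt_nhds hG)).filter_mono hmono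
    have hev2 : ∀ᶠ s in 𝓝[>] a, s ∈ Set.Ioo a t₂ :=
      Ioo_mem_nhdsGT_of_mem ⟨le_rfl, ht₂⟩
    obtain ⟨s, hs1, hs2⟩ := (hev.and hev2).exists
    have hgs : 0 < g s := by
      have h3 : 0 < (g s - g a) / (s - a) := by rw [← slope_def_field]; exact hs1
      have hsa : 0 < s - a := by linarith [hs2.1]
      rcases div_pos_iff.mp h3 with ⟨h4, _⟩ | ⟨_, h5⟩
      · linarith
      · linarith
    exact forward_pos g G hder hpos s (le_trans ha (le_of_lt hs2.1)) hgs t₂ (le_of_lt hs2.2)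

theorem systemA_eventual_sign_beta_sub_alpha (α β γ μ ν : ℝ → ℝ)
    (h : IsAdmissibleSolutionA α β γ μ ν (Set.Ici 0))
    (hμ : ∀ t ∈ Set.Ici (0 : ℝ), μ t = 0) (hν0 : ν 0 ≠ 0) :
    ∃ t₀ : ℝ, 0 ≤ t₀ ∧
      ((∀ t > t₀, α t < β t) ∨ (∀ t > t₀, β t < α t)) := by
  -- notation
  have hα : ∀ t ∈ Set.Ici (0:ℝ), 0 < α t := fun t ht => (h t ht).1
  have hβ : ∀ t ∈ Set.Ici (0:ℝ), 0 < β t := fun t ht => (h t ht).2.1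
  have hγ : ∀ t ∈ Set.Ici (0:ℝ), 0 < γ t := fun t ht => (h t ht).2.2.1
  have hD : ∀ t ∈ Set.Ici (0:ℝ), 0 < β t * γ t - (μ t ^ 2 + ν t ^ 2) := by
    intro t ht; linarith [(h t ht).2.2.2.1]
  have hcont : ∀ t ∈ Set.Ici (0:ℝ), ContinuousWithinAt α (Set.Ici 0) t ∧
      ContinuousWithinAt β (Set.Ici 0) t ∧ ContinuousWithinAt γ (Set.Ici 0) t ∧
      ContinuousWithinAt μ (Set.Ici 0) t ∧ ContinuousWithinAt ν (Set.Ici 0) t := by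
    intro t ht
    obtain ⟨_, _, _, _, h1, h2, h3, h4, h5⟩ := h t ht
    exact ⟨h1.continuousWithinAt, h2.continuousWithinAt, h3.continuousWithinAt,
      h4.continuousWithinAt, h5.continuousWithinAt⟩
  -- Step 1 : ν never vanishes on [0, ∞)
  have hν : ∀ T ∈ Set.Ici (0:ℝ), ν T ≠ 0 := by
    intro T hT hνT
    rcases eq_or_lt_of_le (Set.mem_Ici.mp hT) with hT0 | hT0
    · exact hν0 (by rw [← hT0] at hνT; exact hνT)
    -- Gronwall backwards from T
    set c : ℝ → ℝ := fun s => (α s ^ 2 + β s ^ 2) / (α s * (β s * γ s - (μ s ^ 2 + ν s ^ 2)))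
      with hcdef
    have hsub : Set.Icc (0:ℝ) T ⊆ Set.Ici 0 := fun x hx => hx.1
    have cα : ContinuousOn α (Set.Icc 0 T) := fun t ht => ((hcont t (hsub ht)).1).mono hsub
    have cβ : ContinuousOn β (Set.Icc 0 T) := fun t ht => ((hcont t (hsub ht)).2.1).mono hsub
    have cγ : ContinuousOn γ (Set.Icc 0 T) := fun t ht => ((hcont t (hsub ht)).2.2.1).mono hsub
    have cμ : ContinuousOn μ (Set.Icc 0 T) := fun t ht => ((hcont t (hsub ht)).2.2.2.1).mono hsub
    have cν : ContinuousOn ν (Set.Icc 0 T) := fun t ht => ((hcont t (hsub ht)).2.2.2.2).mono hsub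
    have hccont : ContinuousOn c (Set.Icc 0 T) := by
      apply ContinuousOn.div
      · exact ((cα.pow 2).add (cβ.pow 2))
      · exact cα.mul ((cβ.mul cγ).sub ((cμ.pow 2).add (cν.pow 2)))
      · intro x hx
        exact ne_of_gt (mul_pos (hα x (hsub hx)) (hD x (hsub hx)))
    obtain ⟨K, hK⟩ := isCompact_Icc.exists_bound_of_continuousOn hccont
    -- the time-reversed function
    set w : ℝ → ℝ := fun t => ν (T - t) with hwdef
    have hwcont : ContinuousOn w (Set.Icc 0 T) := by
      apply ContinuousOn.comp (t := Set.Ici 0) (fun s hs => (hcont s hs).2.2.2.2)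
      · exact (continuous_const.sub continuous_id).continuousOn
      · intro x hx; simp only [Set.mem_Ici]; linarith [hx.2]
    have hwd : ∀ t ∈ Set.Ico 0 T,
        HasDerivAt w (w t * c (T - t)) t := by
      intro t ht
      have hs0 : (0:ℝ) < T - t := by linarith [ht.2]
      have hνd : HasDerivAt ν
          (-(ν (T-t) * (α (T-t) ^ 2 + β (T-t) ^ 2)) /
            (α (T-t) * (β (T-t) * γ (T-t) - (μ (T-t) ^ 2 + ν (T-t) ^ 2)))) (T - t) :=
        ((h (T-t) (le_of_lt hs0)).2.2.2.2.2.2.2.2).hasDerivAt (Ici_mem_nhds hs0)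
      have hinner : HasDerivAt (fun t : ℝ => T - t) (-1) t := by
        simpa using (hasDerivAt_id t).const_sub T
      have := hνd.comp t hinner
      refine this.congr_deriv ?_
      simp only [w, c]
      ring
    have hbound : ∀ t ∈ Set.Ico 0 T, ‖w t * c (T - t)‖ ≤ K * ‖w t‖ + 0 := by
      intro t ht
      have hs : T - t ∈ Set.Icc (0:ℝ) T := ⟨by linarith [ht.2], by linarith [ht.1]⟩
      rw [add_zero, norm_mul, mul_comm]
      exact mul_le_mul_of_nonneg_right (hK _ hs) (norm_nonneg _)
    have hδ : ‖w 0‖ ≤ (0:ℝ) := by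
      simp only [hwdef]
      rw [sub_zero, hνT, norm_zero]
    have hfin := norm_le_gronwallBound_of_norm_deriv_right_le hwcont
      (fun t ht => (hwd t ht).hasDerivWithinAt) hδ hbound T ⟨le_of_lt hT0, le_rfl⟩
    rw [gronwallBound_ε0_δ0] at hfin
    apply hν0
    have h0 : w T = ν 0 := by simp [hwdef]
    rw [h0] at hfin
    exact norm_le_zero_iff.mp hfin
  -- Step 2 : define g = β - α and its derivative
  set g : ℝ → ℝ := fun t => β t - α t with hgdef
  set G : ℝ → ℝ := fun t =>
    β t / α t * ((α t ^ 2 - β t ^ 2) / (β t * γ t - (μ t ^ 2 + ν t ^ 2))) -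
      (2 * (β t ^ 2 - α t ^ 2) / (β t * γ t - (μ t ^ 2 + ν t ^ 2)) -
        4 * α t ^ 2 * ν t ^ 2 / (β t * γ t - (μ t ^ 2 + ν t ^ 2)) ^ 2) with hGdef
  have hder : ∀ t ∈ Set.Ici (0:ℝ), HasDerivWithinAt g (G t) (Set.Ici 0) t := by
    intro t ht
    exact ((h t ht).2.2.2.2.2.1).sub ((h t ht).2.2.2.2.1)
  have hpos : ∀ t ∈ Set.Ici (0:ℝ), g t = 0 → 0 < G t := by
    intro t ht hgt
    have hba : β t = α t := by
      have : β t - α t = 0 := hgt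
      linarith
    have hDt := hD t ht
    have hαt := hα t ht
    have hνt := hν t ht
    simp only [hGdef, hba]
    have h1 : α t ^ 2 - α t ^ 2 = 0 := sub_self _
    have h2 : (0:ℝ) < 4 * α t ^ 2 * ν t ^ 2 / (α t * γ t - (μ t ^ 2 + ν t ^ 2)) ^ 2 := by
      apply div_pos
      · have := pow_two_pos_of_ne_zero hνt
        nlinarith [pow_two_pos_of_ne_zero (ne_of_gt hαt)]
      · rw [hba] at hDt
        exact pow_pos hDt 2
    rw [h1]
    simp only [zero_div, mul_zero, zero_sub, neg_neg, sub_self]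
    exact h2
  -- Step 3 : dichotomy
  by_cases hcase : ∃ t₁ ∈ Set.Ici (0:ℝ), α t₁ ≤ β t₁
  · obtain ⟨t₁, ht₁, hab⟩ := hcase
    refine ⟨t₁, ht₁, Or.inl ?_⟩
    intro t ht
    have : 0 < g t := forward_pos' g G hder hpos t₁ ht₁ (by simp [hgdef]; linarith) t ht
    simpa [hgdef, sub_pos] using this
  · push_neg at hcase
    refine ⟨0, le_rfl, Or.inr ?_⟩
    intro t ht
    exact hcase t (le_of_lt ht)
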